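/- Correctness and approximation guarantee of the uniform-increase primal-dual algorithm (algorithmic content of Corollary 4.2): let (E, w, 𝒯) be a hitting set instance with w_e > 0 for all e ∈ E, and let α = max_{T ∈ 𝒯} |T|. Consider the algorithm that maintains A ⊆ E and r : E → ℝ, initialized as A = ∅ and r = w, and while some T ∈ 𝒯 satisfies A ∩ T = ∅, lets 𝒱 = {T ∈ 𝒯 : A ∩ T = ∅}, computes d_e = |{T ∈ 𝒱 : e ∈ T}|, δ_T = min_{e ∈ T} (r_e / d_e) for T ∈ 𝒱, Δ = min_{T ∈ 𝒱} δ_T, updates r_e ← r_e − d_e * Δ for all e ∉ A, and adds all elements with r_e = 0 to A. Then the algorithm terminates after at most |E| iterations of the while loop, its output A is a hitting set, and ∑_{e ∈ A} w_e ≤ α * ∑_{e ∈ A'} w_e for every hitting set A' ⊆ E. -/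

import Mathlib

open scoped Classical

/-- One iteration of the while loop of the uniform-increase primal-dual
algorithm for the hitting set problem, acting on the state `(A, r)`:
`𝒱` is the family of not-yet-hit sets, `d e` the number of members of `𝒱`
containing `e`, `δ T = min_{e ∈ T} (r e / d e)`, `Δ = min_{T ∈ 𝒱} δ T`; the
residual of each `e ∉ A` drops by `d e * Δ`, and all elements of `E` whose
residual becomes `0` are added to `A`. -/
noncomputable def pdStep {γ : Type*} [DecidableEq γ] (E : Finset γ)
    (𝒯 : Finset (Finset γ)) (s : Finset γ × (γ → ℝ)) : Finset γ × (γ → ℝ) :=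
  let A := s.1
  let r := s.2
  let 𝒱 := 𝒯.filter fun T => A ∩ T = ∅
  let d : γ → ℕ := fun e => (𝒱.filter fun T => e ∈ T).card
  let δ : Finset γ → ℝ := fun T =>
    if h : T.Nonempty then T.inf' h fun e => r e / (d e : ℝ) else 0
  let Δ : ℝ := if h : 𝒱.Nonempty then 𝒱.inf' h δ else 0
  let r' : γ → ℝ := fun e => if e ∈ A then r e else r e - (d e : ℝ) * Δ
  (A ∪ E.filter (fun e => r' e = 0), r')

/-- The while loop of the primal-dual algorithm, with an explicit bound
(`fuel`) on the number of iterations: while some `T ∈ 𝒯` satisfies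
`A ∩ T = ∅`, perform `pdStep`. -/
noncomputable def pdLoop {γ : Type*} [DecidableEq γ] (E : Finset γ)
    (𝒯 : Finset (Finset γ)) :
    ℕ → Finset γ × (γ → ℝ) → Finset γ × (γ → ℝ)
  | 0, s => s
  | k + 1, s =>
    if ∃ T ∈ 𝒯, s.1 ∩ T = ∅ then pdLoop E 𝒯 k (pdStep E 𝒯 s) else s

/-- Invariant of the primal-dual algorithm. -/
def pdInv {γ : Type*} [DecidableEq γ] (E : Finset γ) (w : γ → ℝ)
    (𝒯 : Finset (Finset γ)) (s : Finset γ × (γ → ℝ)) : Prop :=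
  s.1 ⊆ E ∧
  (∀ e ∈ E, e ∉ s.1 → 0 < s.2 e) ∧
  (∀ e ∈ s.1, s.2 e = 0) ∧
  ∃ y : Finset γ → ℝ, (∀ T, 0 ≤ y T) ∧ (∀ T, T ∉ 𝒯 → y T = 0) ∧
    ∀ e ∈ E, s.2 e = w e - ∑ T ∈ 𝒯.filter (fun T => e ∈ T), y T

lemma pdStep_spec {γ : Type*} [DecidableEq γ] (E : Finset γ) (w : γ → ℝ)
    (𝒯 : Finset (Finset γ))
    (h𝒯sub : ∀ T ∈ 𝒯, T ⊆ E) (h𝒯ne : ∀ T ∈ 𝒯, T.Nonempty)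
    (s : Finset γ × (γ → ℝ)) (hInv : pdInv E w 𝒯 s)
    (hcond : ∃ T ∈ 𝒯, s.1 ∩ T = ∅) :
    pdInv E w 𝒯 (pdStep E 𝒯 s) ∧ s.1 ⊂ (pdStep E 𝒯 s).1 := by
  obtain ⟨hAE, hpos, hzero, y, hy0, hyT, hyr⟩ := hInv
  set A := s.1 with hA
  set r := s.2 with hr
  set 𝒱 := 𝒯.filter fun T => A ∩ T = ∅ with h𝒱
  set d : γ → ℕ := fun e => (𝒱.filter fun T => e ∈ T).card with hd
  set δ : Finset γ → ℝ := fun T =>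
    if h : T.Nonempty then T.inf' h fun e => r e / (d e : ℝ) else 0 with hδ
  set Δ : ℝ := if h : 𝒱.Nonempty then 𝒱.inf' h δ else 0 with hΔ
  set r' : γ → ℝ := fun e => if e ∈ A then r e else r e - (d e : ℝ) * Δ with hr'
  have hstep : pdStep E 𝒯 s = (A ∪ E.filter (fun e => r' e = 0), r') := rfl
  obtain ⟨T₀, hT₀, hT₀e⟩ := hcond
  have h𝒱ne : 𝒱.Nonempty := ⟨T₀, Finset.mem_filter.mpr ⟨hT₀, hT₀e⟩⟩
  have h𝒱mem : ∀ T ∈ 𝒱, T ∈ 𝒯 ∧ A ∩ T = ∅ := fun T hT => Finset.mem_filter.mp hT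
  have hdpos : ∀ T ∈ 𝒱, ∀ e ∈ T, 0 < d e := by
    intro T hT e he
    exact Finset.card_pos.mpr ⟨T, Finset.mem_filter.mpr ⟨hT, he⟩⟩
  have helem : ∀ T ∈ 𝒱, ∀ e ∈ T, e ∈ E ∧ e ∉ A ∧ 0 < r e := by
    intro T hT e he
    obtain ⟨hT𝒯, hTA⟩ := h𝒱mem T hT
    have heE : e ∈ E := h𝒯sub T hT𝒯 he
    have heA : e ∉ A := by
      intro h
      have : e ∈ A ∩ T := Finset.mem_inter.mpr ⟨h, he⟩
      simp [hTA] at this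
    exact ⟨heE, heA, hpos e heE heA⟩
  have hδpos : ∀ T ∈ 𝒱, 0 < δ T := by
    intro T hT
    have hTne : T.Nonempty := h𝒯ne T (h𝒱mem T hT).1
    rw [hδ]
    simp only [dif_pos hTne]
    rw [Finset.lt_inf'_iff]
    intro e he
    obtain ⟨_, _, hre⟩ := helem T hT e he
    exact div_pos hre (by exact_mod_cast hdpos T hT e he)
  have hΔeq : Δ = 𝒱.inf' h𝒱ne δ := by rw [hΔ, dif_pos h𝒱ne]
  have hΔpos : 0 < Δ := by
    rw [hΔeq, Finset.lt_inf'_iff]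
    exact hδpos
  have hΔle : ∀ T ∈ 𝒱, ∀ e ∈ T, Δ ≤ r e / (d e : ℝ) := by
    intro T hT e he
    have h1 : Δ ≤ δ T := hΔeq ▸ Finset.inf'_le _ hT
    have hTne : T.Nonempty := h𝒯ne T (h𝒱mem T hT).1
    have h2 : δ T ≤ r e / (d e : ℝ) := by
      rw [hδ]; simp only [dif_pos hTne]
      exact Finset.inf'_le _ he
    linarith
  have hkey : ∀ e, e ∉ A → (d e : ℝ) * Δ ≤ r e ∨ d e = 0 := by
    intro e heA
    by_cases hde : d e = 0
    · exact Or.inr hde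
    · left
      have : (𝒱.filter fun T => e ∈ T).Nonempty :=
        Finset.card_pos.mp (Nat.pos_of_ne_zero hde)
      obtain ⟨T, hT⟩ := this
      obtain ⟨hT𝒱, heT⟩ := Finset.mem_filter.mp hT
      have h1 := hΔle T hT𝒱 e heT
      have hd0 : (0 : ℝ) < (d e : ℝ) := by exact_mod_cast Nat.pos_of_ne_zero hde
      rw [le_div_iff₀ hd0] at h1
      linarith [h1]
  have hkey' : ∀ e ∈ E, e ∉ A → 0 ≤ r' e ∧ ((d e : ℝ) * Δ ≤ r e) := by
    intro e heE heA
    rcases hkey e heA with h | h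
    · constructor
      · rw [hr']; simp only [if_neg heA]; linarith
      · exact h
    · have hre := hpos e heE heA
      constructor
      · rw [hr']; simp only [if_neg heA, h]; push_cast; linarith
      · rw [h]; push_cast; linarith
  -- d e = 0 for e ∈ A
  have hdA : ∀ e ∈ A, d e = 0 := by
    intro e heA
    rw [hd]
    simp only [Finset.card_eq_zero]
    rw [Finset.filter_eq_empty_iff]
    intro T hT heT
    have := (h𝒱mem T hT).2
    have : e ∈ A ∩ T := Finset.mem_inter.mpr ⟨heA, heT⟩
    simp_all
  have hr'A : ∀ e ∈ A, r' e = r e := by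
    intro e heA; rw [hr']; simp [heA]
  refine ⟨⟨?_, ?_, ?_, ?_⟩, ?_⟩
  · rw [hstep]
    exact Finset.union_subset hAE (Finset.filter_subset _ _)
  · rw [hstep]
    intro e heE heA'
    simp only [Finset.mem_union, Finset.mem_filter, not_or, not_and] at heA'
    obtain ⟨heA, hne⟩ := heA'
    have hne' : r' e ≠ 0 := hne heE
    have h0 := (hkey' e heE heA).1
    exact lt_of_le_of_ne h0 (Ne.symm hne')
  · rw [hstep]
    intro e he
    show r' e = 0
    simp only [Finset.mem_union, Finset.mem_filter] at he
    rcases he with he | ⟨_, he⟩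
    · rw [hr'A e he]; exact hzero e he
    · exact he
  · refine ⟨fun T => if T ∈ 𝒱 then y T + Δ else y T, ?_, ?_, ?_⟩
    · intro T
      by_cases hT : T ∈ 𝒱 <;> simp only [hT, if_true, if_false] <;>
        [skip; exact hy0 T]
      have := hy0 T; linarith
    · intro T hT
      have : T ∉ 𝒱 := fun h => hT (h𝒱mem T h).1
      simp [this, hyT T hT]
    · intro e heE
      have hsum : ∑ T ∈ 𝒯.filter (fun T => e ∈ T),
          (if T ∈ 𝒱 then y T + Δ else y T)
          = (∑ T ∈ 𝒯.filter (fun T => e ∈ T), y T) + (d e : ℝ) * Δ := by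
        have h1 : ∀ T, (if T ∈ 𝒱 then y T + Δ else y T)
            = y T + (if T ∈ 𝒱 then Δ else 0) := by
          intro T; split <;> simp
        simp_rw [h1]
        rw [Finset.sum_add_distrib]
        congr 1
        rw [Finset.sum_ite_mem]
        have heq : 𝒯.filter (fun T => e ∈ T) ∩ 𝒱 = 𝒱.filter (fun T => e ∈ T) := by
          ext T
          simp only [Finset.mem_inter, Finset.mem_filter, h𝒱]
          tauto
        rw [heq, Finset.sum_const, nsmul_eq_mul]
      rw [hstep]
      simp only []
      rw [hsum]
      by_cases heA : e ∈ A
      · rw [hr'A e heA, hdA e heA]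
        push_cast
        rw [hyr e heE]
        ring
      · rw [hr']
        simp only [if_neg heA]
        rw [hyr e heE]
        ring
  · rw [hstep]
    obtain ⟨T₁, hT₁, hinfT⟩ := Finset.exists_mem_eq_inf' h𝒱ne δ
    have hT₁ne : T₁.Nonempty := h𝒯ne T₁ (h𝒱mem T₁ hT₁).1
    have hδT₁ : δ T₁ = T₁.inf' hT₁ne fun e => r e / (d e : ℝ) := by
      rw [hδ]; simp [hT₁ne]
    obtain ⟨e₁, he₁, hinfe⟩ := Finset.exists_mem_eq_inf' hT₁ne fun e => r e / (d e : ℝ)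
    obtain ⟨he₁E, he₁A, _⟩ := helem T₁ hT₁ e₁ he₁
    have hΔval : Δ = r e₁ / (d e₁ : ℝ) := by
      rw [hΔeq, hinfT, hδT₁, hinfe]
    have hd₁ : (d e₁ : ℝ) ≠ 0 := by
      exact_mod_cast (hdpos T₁ hT₁ e₁ he₁).ne'
    have hr'e₁ : r' e₁ = 0 := by
      rw [hr']
      simp only [if_neg he₁A, hΔval]
      field_simp
      ring
    rw [Finset.ssubset_iff_of_subset Finset.subset_union_left]
    exact ⟨e₁, Finset.mem_union_right _ (Finset.mem_filter.mpr ⟨he₁E, hr'e₁⟩), he₁A⟩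

lemma pdLoop_spec {γ : Type*} [DecidableEq γ] (E : Finset γ) (w : γ → ℝ)
    (𝒯 : Finset (Finset γ))
    (h𝒯sub : ∀ T ∈ 𝒯, T ⊆ E) (h𝒯ne : ∀ T ∈ 𝒯, T.Nonempty) :
    ∀ (k : ℕ) (s : Finset γ × (γ → ℝ)), pdInv E w 𝒯 s → E.card ≤ k + s.1.card →
      pdInv E w 𝒯 (pdLoop E 𝒯 k s) ∧ ¬∃ T ∈ 𝒯, (pdLoop E 𝒯 k s).1 ∩ T = ∅ := by
  intro k
  induction k with
  | zero =>
    intro s hInv hcard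
    have hAeq : s.1 = E := Finset.eq_of_subset_of_card_le hInv.1 (by omega)
    simp only [pdLoop]
    refine ⟨hInv, ?_⟩
    rintro ⟨T, hT, hTe⟩
    obtain ⟨e, he⟩ := h𝒯ne T hT
    have : e ∈ s.1 ∩ T := Finset.mem_inter.mpr ⟨hAeq ▸ h𝒯sub T hT he, he⟩
    simp [hTe] at this
  | succ k ih =>
    intro s hInv hcard
    by_cases h : ∃ T ∈ 𝒯, s.1 ∩ T = ∅
    · rw [pdLoop, if_pos h]
      obtain ⟨hInv', hss⟩ := pdStep_spec E w 𝒯 h𝒯sub h𝒯ne s hInv h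
      have := Finset.card_lt_card hss
      exact ih _ hInv' (by omega)
    · rw [pdLoop, if_neg h]
      exact ⟨hInv, h⟩

lemma pd_weight_bound {γ : Type*} [DecidableEq γ] (E : Finset γ) (w : γ → ℝ)
    (𝒯 : Finset (Finset γ)) (A : Finset γ)
    (y : Finset γ → ℝ) (hy0 : ∀ T, 0 ≤ y T)
    (htight : ∀ e ∈ A, w e = ∑ T ∈ 𝒯.filter (fun T => e ∈ T), y T)
    (hfeas : ∀ e ∈ E, ∑ T ∈ 𝒯.filter (fun T => e ∈ T), y T ≤ w e)
    (α : ℝ) (hα : α = (𝒯.sup Finset.card : ℕ))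
    (A' : Finset γ) (hA'E : A' ⊆ E) (hA'hit : ∀ T ∈ 𝒯, (A' ∩ T).Nonempty) :
    ∑ e ∈ A, w e ≤ α * ∑ e ∈ A', w e := by
  have hα0 : 0 ≤ α := by rw [hα]; positivity
  have swap : ∀ B : Finset γ, ∑ e ∈ B, ∑ T ∈ 𝒯.filter (fun T => e ∈ T), y T
      = ∑ T ∈ 𝒯, ((B ∩ T).card : ℝ) * y T := by
    intro B
    have h1 : ∀ e, ∑ T ∈ 𝒯.filter (fun T => e ∈ T), y T
        = ∑ T ∈ 𝒯, if e ∈ T then y T else 0 := fun e => Finset.sum_filter _ _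
    simp_rw [h1]
    rw [Finset.sum_comm]
    refine Finset.sum_congr rfl fun T _ => ?_
    rw [← Finset.sum_filter, Finset.filter_mem_eq_inter, Finset.sum_const, nsmul_eq_mul]
  calc ∑ e ∈ A, w e = ∑ T ∈ 𝒯, ((A ∩ T).card : ℝ) * y T := by
        rw [← swap]; exact Finset.sum_congr rfl htight
    _ ≤ ∑ T ∈ 𝒯, α * y T := by
        refine Finset.sum_le_sum fun T hT => ?_
        refine mul_le_mul_of_nonneg_right ?_ (hy0 T)
        rw [hα]
        have h1 : (A ∩ T).card ≤ T.card := Finset.card_le_card Finset.inter_subset_right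
        have h2 : T.card ≤ 𝒯.sup Finset.card := Finset.le_sup hT
        exact_mod_cast h1.trans h2
    _ = α * ∑ T ∈ 𝒯, y T := by rw [Finset.mul_sum]
    _ ≤ α * ∑ T ∈ 𝒯, ((A' ∩ T).card : ℝ) * y T := by
        refine mul_le_mul_of_nonneg_left (Finset.sum_le_sum fun T hT => ?_) hα0
        have h1 : 1 ≤ ((A' ∩ T).card : ℝ) := by
          exact_mod_cast Finset.card_pos.mpr (hA'hit T hT)
        nlinarith [hy0 T]
    _ = α * ∑ e ∈ A', ∑ T ∈ 𝒯.filter (fun T => e ∈ T), y T := by rw [swap]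
    _ ≤ α * ∑ e ∈ A', w e := by
        refine mul_le_mul_of_nonneg_left
          (Finset.sum_le_sum fun e he => hfeas e (hA'E he)) hα0

/-- Correctness and approximation guarantee of the uniform-increase
primal-dual algorithm: starting from `A = ∅`, `r = w`, within at most `|E|`
iterations of the while loop the algorithm terminates (so the fuel `|E|` is
never exhausted), its output `A` is a hitting set, and its weight is at most
`α = max_{T ∈ 𝒯} |T|` times the weight of any hitting set `A'`. -/
theorem pd_algorithm_correct {γ : Type*} [DecidableEq γ]
    (E : Finset γ) (w : γ → ℝ) (𝒯 : Finset (Finset γ))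
    (hw : ∀ e ∈ E, 0 < w e)
    (h𝒯sub : ∀ T ∈ 𝒯, T ⊆ E) (h𝒯ne : ∀ T ∈ 𝒯, T.Nonempty)
    (α : ℝ) (hα : α = (𝒯.sup Finset.card : ℕ)) :
    ¬ (∃ T ∈ 𝒯, (pdLoop E 𝒯 E.card (∅, w)).1 ∩ T = ∅) ∧
      (∀ T ∈ 𝒯, ((pdLoop E 𝒯 E.card (∅, w)).1 ∩ T).Nonempty) ∧
      ∀ A' ⊆ E, (∀ T ∈ 𝒯, (A' ∩ T).Nonempty) →
        ∑ e ∈ (pdLoop E 𝒯 E.card (∅, w)).1, w e ≤ α * ∑ e ∈ A', w e := by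
  have hInv0 : pdInv E w 𝒯 (∅, w) := by
    refine ⟨Finset.empty_subset _, fun e he _ => hw e he, by simp, 0, by simp, by simp,
      fun e _ => by simp⟩
  obtain ⟨hInv, hdone⟩ := pdLoop_spec E w 𝒯 h𝒯sub h𝒯ne E.card (∅, w) hInv0 (by simp)
  obtain ⟨hAE, hpos, hzero, y, hy0, hyT, hyr⟩ := hInv
  refine ⟨hdone, ?_, ?_⟩
  · intro T hT
    rw [Finset.nonempty_iff_ne_empty]
    intro h
    exact hdone ⟨T, hT, h⟩
  · intro A' hA'E hA'hit
    refine pd_weight_bound E w 𝒯 _ y hy0 ?_ ?_ α hα A' hA'E hA'hit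
    · intro e he
      have heE := hAE he
      have := hyr e heE
      have h0 := hzero e he
      linarith
    · intro e he
      by_cases heA : e ∈ (pdLoop E 𝒯 E.card (∅, w)).1
      · have := hzero e heA
        have := hyr e he
        linarith
      · have := hpos e he heA
        have := hyr e he
        linarith
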